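/- Let s be a nonzero real number. Then s belongs to the subring ℤ[1/s] of ℝ if and only if s is an algebraic integer (i.e., s is a root of a monic polynomial with integer coefficients). -/

import Mathlib

open Polynomial

lemma reflect_natDegree_le (n : ℕ) (p : ℤ[X]) (hp : p.natDegree ≤ n) :
    (reflect n p).natDegree ≤ n := by
  apply natDegree_le_iff_coeff_eq_zero.mpr
  intro i hi
  rw [coeff_reflect, revAt_eq_self_of_lt hi]
  exact coeff_eq_zero_of_natDegree_lt (lt_of_le_of_lt hp hi)

theorem stmt_4 (s : ℝ) (hs : s ≠ 0) :
    s ∈ Algebra.adjoin ℤ ({s⁻¹} : Set ℝ) ↔ IsIntegral ℤ s := by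
  haveI : Invertible s := invertibleOfNonzero hs
  haveI : Invertible s⁻¹ := invertibleOfNonzero (inv_ne_zero hs)
  have hinvOf : (⅟(s⁻¹) : ℝ) = s := by rw [invOf_eq_inv, inv_inv]
  have hinvOf' : (⅟s : ℝ) = s⁻¹ := invOf_eq_inv s
  rw [Algebra.adjoin_singleton_eq_range_aeval]
  constructor
  · rintro ⟨p, hp⟩

    set n := p.natDegree with hn
    refine ⟨X ^ (n + 1) - reflect n p, monic_X_pow_sub ?_, ?_⟩
    · exact lt_of_le_of_lt (degree_le_of_natDegree_le (reflect_natDegree_le n p le_rfl))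
        (by exact_mod_cast Nat.lt_succ_self n)
    · have key := eval₂_reflect_mul_pow (algebraMap ℤ ℝ) s⁻¹ n p le_rfl
      have hp' : (aeval s⁻¹) p = s := hp
      rw [hinvOf, ← aeval_def, ← aeval_def, hp'] at key
      have hs' : aeval s (reflect n p) = s ^ (n + 1) := by
        have hpow : ((s : ℝ)⁻¹) ^ n ≠ 0 := pow_ne_zero _ (inv_ne_zero hs)
        field_simp at key
        rw [pow_succ]
        have h := key
        rw [one_div, inv_pow, ← div_eq_mul_inv, div_eq_iff (pow_ne_zero _ hs)] at h
        linear_combination h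
      rw [← aeval_def]
      simp [map_sub, hs']
  · rintro ⟨p, hmonic, hroot⟩
    set n := p.natDegree with hn
    have key := eval₂_reflect_mul_pow (algebraMap ℤ ℝ) s n p le_rfl
    rw [hinvOf', ← aeval_def, ← aeval_def] at key
    rw [show (aeval s) p = 0 from hroot, mul_eq_zero] at key
    have hrefl : aeval s⁻¹ (reflect n p) = 0 :=
      key.resolve_right (pow_ne_zero _ hs)
    have hc0 : (reflect n p).coeff 0 = 1 := by
      rw [coeff_reflect]
      simpa [hn] using hmonic.coeff_natDegree
    have hdivX := X_mul_divX_add (reflect n p)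
    refine ⟨-(reflect n p).divX, ?_⟩
    show (aeval s⁻¹) (-(reflect n p).divX) = s
    have := congrArg (aeval s⁻¹) hdivX
    rw [map_add, map_mul, aeval_X, aeval_C, hrefl, hc0] at this
    simp only [map_neg]
    have h1 : s⁻¹ * aeval s⁻¹ (reflect n p).divX = -1 := by
      have : s⁻¹ * aeval s⁻¹ (reflect n p).divX + 1 = 0 := by simpa using this
      linarith
    field_simp at h1
    rw [one_div] at h1
    linarith
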